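/- For each integer k ≥ 2, the set X_k := {(t₁,t₂,t₃,t₄,t₅) ∈ (Z/kZ)⁵ : t₁,t₂,t₃ ∉ {0, t₄, t₅} and t₁+t₂+t₃ ≠ t₄+t₅} has cardinality (k-1)(k⁴ - 9k³ + 36k² - 69k + 51). -/

import Mathlib

open Finset

section general
variable {V : Type*} [AddCommGroup V] [Fintype V] [DecidableEq V]

lemma card_fix1 (F F' : Finset V) (s : V) :
    (univ.filter fun p : V × V => p.2 ∈ F' ∧ s - p.1 - p.2 ∈ F).card = F.card * F'.card := by
  rw [← card_product]
  apply card_nbij' (i := fun p => (s - p.1 - p.2, p.2)) (j := fun q => (s - q.1 - q.2, q.2))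
  · intro p hp; simp only [mem_coe, mem_filter, mem_univ, true_and] at hp
    simp [mem_product, hp.1, hp.2]
  · intro q hq; simp only [mem_coe, mem_product] at hq
    simp only [mem_coe, mem_filter, mem_univ, true_and]
    constructor
    · exact hq.2
    · have : s - (s - q.1 - q.2) - q.2 = q.1 := by abel
      rw [this]; exact hq.1
  · intro p _; ext <;> simp <;> abel
  · intro q _; ext <;> simp <;> abel

lemma card_fix2 (F F' : Finset V) (s : V) :
    (univ.filter fun p : V × V => p.1 ∈ F ∧ s - p.1 - p.2 ∈ F').card = F.card * F'.card := by
  rw [← card_product]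
  apply card_nbij' (i := fun p => (p.1, s - p.1 - p.2)) (j := fun q => (q.1, s - q.1 - q.2))
  · intro p hp; simp only [mem_coe, mem_filter, mem_univ, true_and] at hp
    simp [mem_product, hp.1, hp.2]
  · intro q hq; simp only [mem_coe, mem_product] at hq
    simp only [mem_coe, mem_filter, mem_univ, true_and]
    refine ⟨hq.1, ?_⟩
    have : s - q.1 - (s - q.1 - q.2) = q.2 := by abel
    rw [this]; exact hq.2
  · intro p _; ext <;> simp <;> abel
  · intro q _; ext <;> simp <;> abel

lemma card_triple_eq (F : Finset V) (s : V) :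
    (univ.filter fun p : V × V × V =>
        p.1 ∉ F ∧ p.2.1 ∉ F ∧ p.2.2 ∉ F ∧ p.1 + p.2.1 + p.2.2 = s).card
    = (univ.filter fun p : V × V => p.1 ∉ F ∧ p.2 ∉ F ∧ s - p.1 - p.2 ∉ F).card := by
  apply card_nbij' (i := fun p => (p.1, p.2.1)) (j := fun q => (q.1, q.2, s - q.1 - q.2))
  · intro p hp; simp only [mem_coe, mem_filter, mem_univ, true_and] at hp ⊢
    obtain ⟨h1, h2, h3, h4⟩ := hp
    refine ⟨h1, h2, ?_⟩
    have : s - p.1 - p.2.1 = p.2.2 := by rw [← h4]; abel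
    rw [this]; exact h3
  · intro q hq; simp only [mem_coe, mem_filter, mem_univ, true_and] at hq ⊢
    exact ⟨hq.1, hq.2.1, hq.2.2, by abel⟩
  · intro p hp; simp only [mem_coe, mem_filter, mem_univ, true_and] at hp
    have : s - p.1 - p.2.1 = p.2.2 := by rw [← hp.2.2.2]; abel
    simp [this]
  · intro q _; simp

/-- The main structural counting lemma. -/
lemma inner_card (F : Finset V) (s : V) :
    ((univ.filter fun p : V × V × V =>
        p.1 ∉ F ∧ p.2.1 ∉ F ∧ p.2.2 ∉ F ∧ p.1 + p.2.1 + p.2.2 ≠ s).card : ℤ)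
    = (Fᶜ.card : ℤ) ^ 3 - (Fᶜ.card : ℤ) ^ 2 + (Fᶜ.card : ℤ) * F.card - (F.card : ℤ) ^ 2
      + ((univ.filter fun p : V × V =>
          p.1 ∈ F ∧ p.2 ∈ F ∧ s - p.1 - p.2 ∈ F).card : ℤ) := by
  set m : ℤ := (Fᶜ.card : ℤ) with hm
  set f : ℤ := (F.card : ℤ) with hf
  -- step 1: complement of the sum condition within the triple product
  have h1 : ((univ.filter fun p : V × V × V =>
        p.1 ∉ F ∧ p.2.1 ∉ F ∧ p.2.2 ∉ F ∧ p.1 + p.2.1 + p.2.2 ≠ s).card : ℤ)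
      + ((univ.filter fun p : V × V × V =>
        p.1 ∉ F ∧ p.2.1 ∉ F ∧ p.2.2 ∉ F ∧ p.1 + p.2.1 + p.2.2 = s).card : ℤ)
      = m ^ 3 := by
    have base : (univ.filter fun p : V × V × V => p.1 ∉ F ∧ p.2.1 ∉ F ∧ p.2.2 ∉ F)
        = Fᶜ ×ˢ Fᶜ ×ˢ Fᶜ := by
      ext p; simp [mem_product, and_assoc]
    have hs := card_filter_add_card_filter_not
      (s := univ.filter fun p : V × V × V => p.1 ∉ F ∧ p.2.1 ∉ F ∧ p.2.2 ∉ F)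
      (p := fun p => p.1 + p.2.1 + p.2.2 = s)
    rw [filter_filter, filter_filter, base, card_product, card_product] at hs
    have e1 : (univ.filter fun p : V × V × V =>
        (p.1 ∉ F ∧ p.2.1 ∉ F ∧ p.2.2 ∉ F) ∧ p.1 + p.2.1 + p.2.2 = s)
        = (univ.filter fun p : V × V × V =>
        p.1 ∉ F ∧ p.2.1 ∉ F ∧ p.2.2 ∉ F ∧ p.1 + p.2.1 + p.2.2 = s) := by
      ext p; simp only [mem_filter, mem_univ, true_and, mem_compl]; tauto
    have e2 : (univ.filter fun p : V × V × V =>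
        (p.1 ∉ F ∧ p.2.1 ∉ F ∧ p.2.2 ∉ F) ∧ ¬ p.1 + p.2.1 + p.2.2 = s)
        = (univ.filter fun p : V × V × V =>
        p.1 ∉ F ∧ p.2.1 ∉ F ∧ p.2.2 ∉ F ∧ p.1 + p.2.1 + p.2.2 ≠ s) := by
      ext p; simp only [mem_filter, mem_univ, true_and, mem_compl]; tauto
    rw [e1, e2] at hs
    have := congrArg (fun n : ℕ => (n : ℤ)) hs
    push_cast at this
    rw [hm]; linarith
  -- step 2: sum-equal triples as pairs
  have h2 : ((univ.filter fun p : V × V × V =>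
        p.1 ∉ F ∧ p.2.1 ∉ F ∧ p.2.2 ∉ F ∧ p.1 + p.2.1 + p.2.2 = s).card : ℤ)
      = ((univ.filter fun p : V × V => p.1 ∉ F ∧ p.2 ∉ F ∧ s - p.1 - p.2 ∉ F).card : ℤ) := by
    exact congrArg (fun n : ℕ => (n : ℤ)) (card_triple_eq F s)
  -- step 3
  have h3 : ((univ.filter fun p : V × V => p.1 ∉ F ∧ p.2 ∉ F ∧ s - p.1 - p.2 ∉ F).card : ℤ)
      + ((univ.filter fun p : V × V => p.1 ∉ F ∧ p.2 ∉ F ∧ s - p.1 - p.2 ∈ F).card : ℤ)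
      = m ^ 2 := by
    have base : (univ.filter fun p : V × V => p.1 ∉ F ∧ p.2 ∉ F) = Fᶜ ×ˢ Fᶜ := by
      ext p; simp [mem_product]
    have hs := card_filter_add_card_filter_not
      (s := univ.filter fun p : V × V => p.1 ∉ F ∧ p.2 ∉ F)
      (p := fun p => s - p.1 - p.2 ∈ F)
    rw [filter_filter, filter_filter, base, card_product] at hs
    have e1 : (univ.filter fun p : V × V => (p.1 ∉ F ∧ p.2 ∉ F) ∧ s - p.1 - p.2 ∈ F)
        = (univ.filter fun p : V × V => p.1 ∉ F ∧ p.2 ∉ F ∧ s - p.1 - p.2 ∈ F) := by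
      ext p; simp only [mem_filter, mem_univ, true_and, mem_compl]; tauto
    have e2 : (univ.filter fun p : V × V => (p.1 ∉ F ∧ p.2 ∉ F) ∧ ¬ s - p.1 - p.2 ∈ F)
        = (univ.filter fun p : V × V => p.1 ∉ F ∧ p.2 ∉ F ∧ s - p.1 - p.2 ∉ F) := by
      ext p; simp only [mem_filter, mem_univ, true_and, mem_compl]; tauto
    rw [e1, e2] at hs
    have := congrArg (fun n : ℕ => (n : ℤ)) hs
    push_cast at this
    rw [hm]; linarith
  -- step 4
  have h4 : ((univ.filter fun p : V × V => p.1 ∉ F ∧ p.2 ∉ F ∧ s - p.1 - p.2 ∈ F).card : ℤ)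
      + ((univ.filter fun p : V × V => p.1 ∈ F ∧ p.2 ∉ F ∧ s - p.1 - p.2 ∈ F).card : ℤ)
      = f * m := by
    have hs := card_filter_add_card_filter_not
      (s := univ.filter fun p : V × V => p.2 ∈ Fᶜ ∧ s - p.1 - p.2 ∈ F)
      (p := fun p : V × V => p.1 ∈ F)
    rw [filter_filter, filter_filter, card_fix1 F Fᶜ s] at hs
    have e1 : (univ.filter fun p : V × V => (p.2 ∈ Fᶜ ∧ s - p.1 - p.2 ∈ F) ∧ p.1 ∈ F)
        = (univ.filter fun p : V × V => p.1 ∈ F ∧ p.2 ∉ F ∧ s - p.1 - p.2 ∈ F) := by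
      ext p; simp only [mem_filter, mem_univ, true_and, mem_compl]; tauto
    have e2 : (univ.filter fun p : V × V => (p.2 ∈ Fᶜ ∧ s - p.1 - p.2 ∈ F) ∧ ¬ p.1 ∈ F)
        = (univ.filter fun p : V × V => p.1 ∉ F ∧ p.2 ∉ F ∧ s - p.1 - p.2 ∈ F) := by
      ext p; simp only [mem_filter, mem_univ, true_and, mem_compl]; tauto
    rw [e1, e2] at hs
    have := congrArg (fun n : ℕ => (n : ℤ)) hs
    push_cast at this
    rw [hm, hf]; push_cast; linarith
  -- step 5
  have h5 : ((univ.filter fun p : V × V => p.1 ∈ F ∧ p.2 ∉ F ∧ s - p.1 - p.2 ∈ F).card : ℤ)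
      + ((univ.filter fun p : V × V => p.1 ∈ F ∧ p.2 ∈ F ∧ s - p.1 - p.2 ∈ F).card : ℤ)
      = f * f := by
    have hs := card_filter_add_card_filter_not
      (s := univ.filter fun p : V × V => p.1 ∈ F ∧ s - p.1 - p.2 ∈ F)
      (p := fun p : V × V => p.2 ∈ F)
    rw [filter_filter, filter_filter, card_fix2 F F s] at hs
    have e1 : (univ.filter fun p : V × V => (p.1 ∈ F ∧ s - p.1 - p.2 ∈ F) ∧ p.2 ∈ F)
        = (univ.filter fun p : V × V => p.1 ∈ F ∧ p.2 ∈ F ∧ s - p.1 - p.2 ∈ F) := by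
      ext p; simp only [mem_filter, mem_univ, true_and, mem_compl]; tauto
    have e2 : (univ.filter fun p : V × V => (p.1 ∈ F ∧ s - p.1 - p.2 ∈ F) ∧ ¬ p.2 ∈ F)
        = (univ.filter fun p : V × V => p.1 ∈ F ∧ p.2 ∉ F ∧ s - p.1 - p.2 ∈ F) := by
      ext p; simp only [mem_filter, mem_univ, true_and, mem_compl]; tauto
    rw [e1, e2] at hs
    have := congrArg (fun n : ℕ => (n : ℤ)) hs
    push_cast at this
    rw [hf]; push_cast; linarith
  linarith

def Tcard (F : Finset V) (s : V) : ℕ :=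
  (univ.filter fun p : V × V => p.1 ∈ F ∧ p.2 ∈ F ∧ s - p.1 - p.2 ∈ F).card

lemma Tcard_eq_sum (F : Finset V) (s : V) :
    Tcard F s = ∑ u ∈ F, ∑ v ∈ F, if s - u - v ∈ F then 1 else 0 := by
  have e : (univ.filter fun p : V × V => p.1 ∈ F ∧ p.2 ∈ F ∧ s - p.1 - p.2 ∈ F)
      = (F ×ˢ F).filter (fun p => s - p.1 - p.2 ∈ F) := by
    ext p; simp only [mem_filter, mem_univ, true_and, mem_product]; tauto
  rw [Tcard, e, card_filter, Finset.sum_product]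

lemma Tcard_zero : Tcard ({0} : Finset V) 0 = 1 := by
  rw [Tcard_eq_sum]; simp [Finset.filter_singleton]

lemma Tcard_two (a s : V) (ha : a ≠ 0) (hs : s = a ∨ s = a + a) :
    Tcard ({0, a} : Finset V) s = 3 + (if a + a = 0 then 1 else 0) := by
  have h0 : (0 : V) ∉ ({a} : Finset V) := by simp [Ne.symm ha]
  rw [Tcard_eq_sum]
  simp only [Finset.sum_insert h0, Finset.sum_singleton]
  by_cases h2 : a + a = 0
  · have hneg : -a = a := neg_eq_iff_add_eq_zero.mpr h2
    rcases hs with h | h <;>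
      (rw [h]; simp [ha, h2, sub_sub, hneg, Ne.symm ha])
  · have hneg : ¬ (-a = a) := fun h => h2 (neg_eq_iff_add_eq_zero.mp h)
    rcases hs with h | h <;>
      (rw [h]; simp [ha, h2, sub_sub, hneg, Ne.symm ha, add_eq_left, add_eq_right])

lemma Tcard_three (a b : V) (ha : a ≠ 0) (hb : b ≠ 0) (hab : a ≠ b) :
    Tcard ({0, a, b} : Finset V) (a + b)
      = 6 + (if a + b = 0 then 1 else 0) + (if b = a + a then 1 else 0)
        + (if a = b + b then 1 else 0) := by
  have h0 : (0 : V) ∉ ({a, b} : Finset V) := by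
    simp [Ne.symm ha, Ne.symm hb]
  have h1 : a ∉ ({b} : Finset V) := by simp [hab]
  rw [Tcard_eq_sum]
  simp only [Finset.sum_insert h0, Finset.sum_insert h1, Finset.sum_singleton]
  have m1 : a + b - 0 - 0 = a + b := by abel
  have m2 : a + b - 0 - a = b := by abel
  have m3 : a + b - 0 - b = a := by abel
  have m4 : a + b - a - 0 = b := by abel
  have m5 : a + b - a - a = b - a := by abel
  have m6 : a + b - a - b = 0 := by abel
  have m7 : a + b - b - 0 = a := by abel
  have m8 : a + b - b - a = 0 := by abel
  have m9 : a + b - b - b = a - b := by abel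
  simp only [m1, m2, m3, m4, m5, m6, m7, m8, m9]
  have e1 : (a + b ∈ ({0, a, b} : Finset V)) = (a + b = 0) := by
    simp only [mem_insert, mem_singleton]
    refine propext ⟨?_, fun h => Or.inl h⟩
    rintro (h | h | h)
    · exact h
    · exact absurd (add_eq_left.mp h) hb
    · exact absurd (add_eq_right.mp h) ha
  have e2 : (b - a ∈ ({0, a, b} : Finset V)) = (b = a + a) := by
    simp only [mem_insert, mem_singleton]
    refine propext ⟨?_, fun h => Or.inr (Or.inl (sub_eq_iff_eq_add.mpr h))⟩
    rintro (h | h | h)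
    · exact absurd (sub_eq_zero.mp h).symm hab
    · exact sub_eq_iff_eq_add.mp h
    · exact absurd (sub_eq_self.mp h) ha
  have e3 : (a - b ∈ ({0, a, b} : Finset V)) = (a = b + b) := by
    simp only [mem_insert, mem_singleton]
    refine propext ⟨?_, fun h => Or.inr (Or.inr (sub_eq_iff_eq_add.mpr h))⟩
    rintro (h | h | h)
    · exact absurd (sub_eq_zero.mp h) hab
    · exact absurd (sub_eq_self.mp h) hb
    · exact sub_eq_iff_eq_add.mp h
  simp only [e1, e2, e3]
  have t2 : b ∈ ({0, a, b} : Finset V) := by simp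
  have t3 : a ∈ ({0, a, b} : Finset V) := by simp
  have t6 : (0 : V) ∈ ({0, a, b} : Finset V) := by simp
  simp only [if_pos t2, if_pos t3, if_pos t6, t2, t3, t6, if_true]
  ring

/-- inner count in the generic case -/
lemma inner_eval_three (a b : V) (ha : a ≠ 0) (hb : b ≠ 0) (hab : a ≠ b) :
    ((univ.filter fun p : V × V × V =>
        p.1 ∉ ({0, a, b} : Finset V) ∧ p.2.1 ∉ ({0, a, b} : Finset V) ∧
        p.2.2 ∉ ({0, a, b} : Finset V) ∧ p.1 + p.2.1 + p.2.2 ≠ a + b).card : ℤ)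
    = (((Fintype.card V : ℤ) - 3) ^ 3 - ((Fintype.card V : ℤ) - 3) ^ 2
        + ((Fintype.card V : ℤ) - 3) * 3 - 9 + 6)
      + (if a + b = 0 then 1 else 0) + (if b = a + a then 1 else 0)
      + (if a = b + b then 1 else 0) := by
  have hF : ({0, a, b} : Finset V).card = 3 := by
    rw [card_insert_of_notMem (by simp [Ne.symm ha, Ne.symm hb]),
      card_insert_of_notMem (by simp [hab]), card_singleton]
  have hle : ({0, a, b} : Finset V).card ≤ Fintype.card V := by
    simpa using card_le_univ ({0, a, b} : Finset V)
  have hcompl : ((({0, a, b} : Finset V)ᶜ).card : ℤ) = (Fintype.card V : ℤ) - 3 := by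
    rw [card_compl, Nat.cast_sub hle, hF]; norm_num
  rw [inner_card ({0, a, b} : Finset V) (a + b)]
  rw [hcompl, hF]
  have hT := Tcard_three a b ha hb hab
  rw [Tcard] at hT
  rw [hT]
  push_cast
  ring

lemma inner_eval_two (a s : V) (ha : a ≠ 0) (hs : s = a ∨ s = a + a) :
    ((univ.filter fun p : V × V × V =>
        p.1 ∉ ({0, a} : Finset V) ∧ p.2.1 ∉ ({0, a} : Finset V) ∧
        p.2.2 ∉ ({0, a} : Finset V) ∧ p.1 + p.2.1 + p.2.2 ≠ s).card : ℤ)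
    = (((Fintype.card V : ℤ) - 2) ^ 3 - ((Fintype.card V : ℤ) - 2) ^ 2
        + ((Fintype.card V : ℤ) - 2) * 2 - 4 + 3)
      + (if a + a = 0 then 1 else 0) := by
  have hF : ({0, a} : Finset V).card = 2 := by
    rw [card_insert_of_notMem (by simp [Ne.symm ha]), card_singleton]
  have hle : ({0, a} : Finset V).card ≤ Fintype.card V := by
    simpa using card_le_univ ({0, a} : Finset V)
  have hcompl : ((({0, a} : Finset V)ᶜ).card : ℤ) = (Fintype.card V : ℤ) - 2 := by
    rw [card_compl, Nat.cast_sub hle, hF]; norm_num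
  rw [inner_card ({0, a} : Finset V) s, hcompl, hF]
  have hT := Tcard_two a s ha hs
  rw [Tcard] at hT
  rw [hT]
  push_cast
  ring

lemma inner_eval_one :
    ((univ.filter fun p : V × V × V =>
        p.1 ∉ ({0} : Finset V) ∧ p.2.1 ∉ ({0} : Finset V) ∧
        p.2.2 ∉ ({0} : Finset V) ∧ p.1 + p.2.1 + p.2.2 ≠ 0).card : ℤ)
    = (((Fintype.card V : ℤ) - 1) ^ 3 - ((Fintype.card V : ℤ) - 1) ^ 2
        + ((Fintype.card V : ℤ) - 1) * 1 - 1 + 1) := by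
  have hF : ({0} : Finset V).card = 1 := card_singleton 0
  have hle : ({0} : Finset V).card ≤ Fintype.card V := by
    simpa using card_le_univ ({0} : Finset V)
  have hcompl : ((({0} : Finset V)ᶜ).card : ℤ) = (Fintype.card V : ℤ) - 1 := by
    rw [card_compl, Nat.cast_sub hle, hF]; norm_num
  rw [inner_card ({0} : Finset V) 0, hcompl, hF]
  have hT := Tcard_zero (V := V)
  rw [Tcard] at hT
  rw [hT]
  push_cast
  ring

def C1 (K : ℤ) : ℤ := (K-1)^3-(K-1)^2+(K-1)*1-1+1
def C2 (K : ℤ) : ℤ := (K-2)^3-(K-2)^2+(K-2)*2-4+3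
def C3 (K : ℤ) : ℤ := (K-3)^3-(K-3)^2+(K-3)*3-9+6

def Icard (a b : V) : ℤ :=
  ((univ.filter fun p : V × V × V =>
      p.1 ∉ ({0, a, b} : Finset V) ∧ p.2.1 ∉ ({0, a, b} : Finset V) ∧
      p.2.2 ∉ ({0, a, b} : Finset V) ∧ p.1 + p.2.1 + p.2.2 ≠ a + b).card : ℤ)

lemma Icard_gen (a b : V) (ha : a ≠ 0) (hb : b ≠ 0) (hab : a ≠ b) :
    Icard a b = C3 (Fintype.card V) + (if a + b = 0 then 1 else 0)
      + (if b = a + a then 1 else 0) + (if a = b + b then 1 else 0) := by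
  rw [Icard, inner_eval_three a b ha hb hab, C3]

lemma Icard_00 : Icard (0 : V) 0 = C1 (Fintype.card V) := by
  rw [Icard]
  have e : (univ.filter fun p : V × V × V =>
      p.1 ∉ ({0, 0, 0} : Finset V) ∧ p.2.1 ∉ ({0, 0, 0} : Finset V) ∧
      p.2.2 ∉ ({0, 0, 0} : Finset V) ∧ p.1 + p.2.1 + p.2.2 ≠ 0 + 0)
      = (univ.filter fun p : V × V × V =>
      p.1 ∉ ({0} : Finset V) ∧ p.2.1 ∉ ({0} : Finset V) ∧
      p.2.2 ∉ ({0} : Finset V) ∧ p.1 + p.2.1 + p.2.2 ≠ 0) := by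
    ext p
    simp only [mem_filter, mem_univ, true_and, mem_insert, mem_singleton, not_or, add_zero,
      zero_add]
    tauto
  rw [e, inner_eval_one, C1]

lemma Icard_0b (b : V) (hb : b ≠ 0) :
    Icard (0 : V) b = C2 (Fintype.card V) + (if b + b = 0 then 1 else 0) := by
  rw [Icard]
  have e : (univ.filter fun p : V × V × V =>
      p.1 ∉ ({0, 0, b} : Finset V) ∧ p.2.1 ∉ ({0, 0, b} : Finset V) ∧
      p.2.2 ∉ ({0, 0, b} : Finset V) ∧ p.1 + p.2.1 + p.2.2 ≠ 0 + b)
      = (univ.filter fun p : V × V × V =>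
      p.1 ∉ ({0, b} : Finset V) ∧ p.2.1 ∉ ({0, b} : Finset V) ∧
      p.2.2 ∉ ({0, b} : Finset V) ∧ p.1 + p.2.1 + p.2.2 ≠ b) := by
    ext p
    simp only [mem_filter, mem_univ, true_and, mem_insert, mem_singleton, not_or, zero_add]
    tauto
  rw [e, inner_eval_two b b hb (Or.inl rfl), C2]

lemma Icard_a0 (a : V) (ha : a ≠ 0) :
    Icard a (0 : V) = C2 (Fintype.card V) + (if a + a = 0 then 1 else 0) := by
  rw [Icard]
  have e : (univ.filter fun p : V × V × V =>
      p.1 ∉ ({0, a, 0} : Finset V) ∧ p.2.1 ∉ ({0, a, 0} : Finset V) ∧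
      p.2.2 ∉ ({0, a, 0} : Finset V) ∧ p.1 + p.2.1 + p.2.2 ≠ a + 0)
      = (univ.filter fun p : V × V × V =>
      p.1 ∉ ({0, a} : Finset V) ∧ p.2.1 ∉ ({0, a} : Finset V) ∧
      p.2.2 ∉ ({0, a} : Finset V) ∧ p.1 + p.2.1 + p.2.2 ≠ a) := by
    ext p
    simp only [mem_filter, mem_univ, true_and, mem_insert, mem_singleton, not_or, add_zero]
    tauto
  rw [e, inner_eval_two a a ha (Or.inl rfl), C2]

lemma Icard_aa (a : V) (ha : a ≠ 0) :
    Icard a a = C2 (Fintype.card V) + (if a + a = 0 then 1 else 0) := by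
  rw [Icard]
  have e : (univ.filter fun p : V × V × V =>
      p.1 ∉ ({0, a, a} : Finset V) ∧ p.2.1 ∉ ({0, a, a} : Finset V) ∧
      p.2.2 ∉ ({0, a, a} : Finset V) ∧ p.1 + p.2.1 + p.2.2 ≠ a + a)
      = (univ.filter fun p : V × V × V =>
      p.1 ∉ ({0, a} : Finset V) ∧ p.2.1 ∉ ({0, a} : Finset V) ∧
      p.2.2 ∉ ({0, a} : Finset V) ∧ p.1 + p.2.1 + p.2.2 ≠ a + a) := by
    ext p
    simp only [mem_filter, mem_univ, true_and, mem_insert, mem_singleton, not_or]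
    tauto
  rw [e, inner_eval_two a (a + a) ha (Or.inr rfl), C2]

lemma Dsum (a : V) : ((univ.filter fun b : V => b + b = a).card : ℤ)
    = ∑ b : V, (if b + b = a then (1:ℤ) else 0) := by
  rw [card_filter]
  push_cast
  rfl

lemma Dtotal : ∑ a : V, ((univ.filter fun b : V => b + b = a).card : ℤ)
    = (Fintype.card V : ℤ) := by
  have h := Finset.card_eq_sum_card_fiberwise (s := (univ : Finset V)) (t := univ)
    (f := fun b : V => b + b) (fun x _ => mem_univ _)
  rw [card_univ] at h
  rw [← Nat.cast_sum]
  exact_mod_cast h.symm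

lemma row_nonzero (a : V) (ha : a ≠ 0) :
    ∑ b : V, Icard a b
      = 2 * C2 (Fintype.card V) + ((Fintype.card V : ℤ) - 2) * C3 (Fintype.card V) + 2
        + ((univ.filter fun b : V => b + b = a).card : ℤ) := by
  have h0u : (0 : V) ∈ (univ : Finset V) := mem_univ 0
  have hau : a ∈ (univ : Finset V) \ {0} := by simp [ha]
  rw [show ∑ b : V, Icard a b = ∑ b ∈ (univ : Finset V), Icard a b from rfl,
    Finset.sum_eq_sum_sdiff_singleton_add h0u, Finset.sum_eq_sum_sdiff_singleton_add hau]
  set U := (((univ : Finset V) \ {0}) \ {a}) with hUdef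
  have hmemU : ∀ b, b ∈ U ↔ b ≠ 0 ∧ b ≠ a := by
    intro b; simp [hUdef, and_comm]
  have hcongr : ∑ b ∈ U, Icard a b
      = ∑ b ∈ U, (C3 (Fintype.card V) + ((if a + b = 0 then 1 else 0)
        + ((if b = a + a then 1 else 0) + (if a = b + b then 1 else 0)))) := by
    refine Finset.sum_congr rfl fun b hb => ?_
    obtain ⟨hb0, hba⟩ := (hmemU b).mp hb
    rw [Icard_gen a b ha hb0 (Ne.symm hba)]; ring
  rw [hcongr]
  rw [Finset.sum_add_distrib, Finset.sum_add_distrib, Finset.sum_add_distrib]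
  have h2le : 2 ≤ Fintype.card V := by
    have h := card_le_univ ({0, a} : Finset V)
    rwa [card_insert_of_notMem (by simp [Ne.symm ha]), card_singleton] at h
  have hcardU : ((U.card : ℤ)) = (Fintype.card V : ℤ) - 2 := by
    have h1 : ({a} : Finset V) ⊆ (univ : Finset V) \ {0} := by simp [ha]
    have h2 : ({0} : Finset V) ⊆ (univ : Finset V) := by simp
    rw [hUdef, card_sdiff_of_subset h1, card_sdiff_of_subset h2, card_univ, card_singleton, card_singleton]
    omega
  have hconst : ∑ _b ∈ U, C3 (Fintype.card V)
      = ((Fintype.card V : ℤ) - 2) * C3 (Fintype.card V) := by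
    rw [Finset.sum_const, nsmul_eq_mul, hcardU]
  have hrw : ∀ b : V, ((a + b = 0) = (b = -a)) :=
    fun b => propext (by rw [add_comm, add_eq_zero_iff_eq_neg])
  have S1 : ∑ b ∈ U, (if a + b = 0 then (1:ℤ) else 0)
      = 1 - (if a + a = 0 then 1 else 0) := by
    rw [show ∑ b ∈ U, (if a + b = 0 then (1:ℤ) else 0)
        = ∑ b ∈ U, (if b = -a then (1:ℤ) else 0) from
      Finset.sum_congr rfl (fun b _ => by simp only [hrw])]
    rw [Finset.sum_ite_eq' U (-a) (fun _ => (1:ℤ))]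
    by_cases h : a + a = 0
    · rw [if_pos h, if_neg (show ¬ (-a ∈ U) from by
        simp [hmemU, neg_eq_iff_add_eq_zero.mpr h])]
      norm_num
    · rw [if_neg h, if_pos ((hmemU _).mpr
        ⟨neg_ne_zero.mpr ha, fun hh => h (neg_eq_iff_add_eq_zero.mp hh)⟩)]
      norm_num
  have S2 : ∑ b ∈ U, (if b = a + a then (1:ℤ) else 0)
      = 1 - (if a + a = 0 then 1 else 0) := by
    rw [Finset.sum_ite_eq' U (a + a) (fun _ => (1:ℤ))]
    by_cases h : a + a = 0
    · rw [if_pos h, if_neg (show ¬ (a + a ∈ U) from by simp [hmemU, h])]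
      norm_num
    · rw [if_neg h, if_pos ((hmemU _).mpr ⟨h, fun hh => ha (add_eq_left.mp hh)⟩)]
      norm_num
  have S3 : ∑ b ∈ U, (if a = b + b then (1:ℤ) else 0)
      = ((univ.filter fun b : V => b + b = a).card : ℤ) := by
    have hc : ∀ b : V, ((a = b + b) = (b + b = a)) := fun b => propext eq_comm
    simp only [hc]
    rw [Dsum a, Finset.sum_eq_sum_sdiff_singleton_add h0u,
      Finset.sum_eq_sum_sdiff_singleton_add hau, ← hUdef]
    have t0 : (if (0:V) + 0 = a then (1:ℤ) else 0) = 0 := by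
      rw [if_neg]; intro h; exact ha (by simpa using h.symm)
    have ta : (if a + a = a then (1:ℤ) else 0) = 0 := by
      rw [if_neg]; intro h; exact ha (add_eq_left.mp h)
    rw [t0, ta]; ring
  rw [hconst, S1, S2, S3, Icard_aa a ha, Icard_a0 a ha]
  ring

lemma row_zero :
    ∑ b : V, Icard (0:V) b
      = C1 (Fintype.card V) + ((Fintype.card V : ℤ) - 1) * C2 (Fintype.card V)
        + (((univ.filter fun b : V => b + b = (0:V)).card : ℤ) - 1) := by
  have h0u : (0 : V) ∈ (univ : Finset V) := mem_univ 0
  rw [show ∑ b : V, Icard (0:V) b = ∑ b ∈ (univ : Finset V), Icard (0:V) b from rfl,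
    Finset.sum_eq_sum_sdiff_singleton_add h0u]
  have hcongr : ∑ b ∈ (univ : Finset V) \ {0}, Icard (0:V) b
      = ∑ b ∈ (univ : Finset V) \ {0},
          (C2 (Fintype.card V) + (if b + b = 0 then 1 else 0)) := by
    refine Finset.sum_congr rfl fun b hb => ?_
    have hb0 : b ≠ 0 := by simpa using (mem_sdiff.mp hb).2
    exact Icard_0b b hb0
  rw [hcongr, Finset.sum_add_distrib]
  have h1le : 1 ≤ Fintype.card V := Fintype.card_pos
  have hcard : (((univ : Finset V) \ {0}).card : ℤ) = (Fintype.card V : ℤ) - 1 := by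
    rw [card_sdiff_of_subset (by simp), card_univ, card_singleton]
    omega
  have hconst : ∑ _b ∈ (univ : Finset V) \ {0}, C2 (Fintype.card V)
      = ((Fintype.card V : ℤ) - 1) * C2 (Fintype.card V) := by
    rw [Finset.sum_const, nsmul_eq_mul, hcard]
  have hS : ∑ b ∈ (univ : Finset V) \ {0}, (if b + b = 0 then (1:ℤ) else 0)
      = ((univ.filter fun b : V => b + b = (0:V)).card : ℤ) - 1 := by
    rw [Dsum (0:V), Finset.sum_eq_sum_sdiff_singleton_add h0u]
    have t0 : (if (0:V) + 0 = 0 then (1:ℤ) else 0) = 1 := by rw [if_pos (by simp)]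
    rw [t0]; ring
  rw [hconst, hS, Icard_00]
  ring

end general

theorem card_Xk (k : ℕ) (hk : 2 ≤ k) :
    ({t : ZMod k × ZMod k × ZMod k × ZMod k × ZMod k |
        t.1 ≠ 0 ∧ t.1 ≠ t.2.2.2.1 ∧ t.1 ≠ t.2.2.2.2 ∧
        t.2.1 ≠ 0 ∧ t.2.1 ≠ t.2.2.2.1 ∧ t.2.1 ≠ t.2.2.2.2 ∧
        t.2.2.1 ≠ 0 ∧ t.2.2.1 ≠ t.2.2.2.1 ∧ t.2.2.1 ≠ t.2.2.2.2 ∧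
        t.1 + t.2.1 + t.2.2.1 ≠ t.2.2.2.1 + t.2.2.2.2}.ncard : ℤ)
      = ((k : ℤ) - 1) *
          ((k : ℤ) ^ 4 - 9 * (k : ℤ) ^ 3 + 36 * (k : ℤ) ^ 2 - 69 * (k : ℤ) + 51) := by
  haveI : NeZero k := ⟨by omega⟩
  classical
  have hcardZ : Fintype.card (ZMod k) = k := ZMod.card k
  set P : ZMod k × ZMod k × ZMod k × ZMod k × ZMod k → Prop := fun t =>
    t.1 ≠ 0 ∧ t.1 ≠ t.2.2.2.1 ∧ t.1 ≠ t.2.2.2.2 ∧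
    t.2.1 ≠ 0 ∧ t.2.1 ≠ t.2.2.2.1 ∧ t.2.1 ≠ t.2.2.2.2 ∧
    t.2.2.1 ≠ 0 ∧ t.2.2.1 ≠ t.2.2.2.1 ∧ t.2.2.1 ≠ t.2.2.2.2 ∧
    t.1 + t.2.1 + t.2.2.1 ≠ t.2.2.2.1 + t.2.2.2.2 with hP
  have hset : {t : ZMod k × ZMod k × ZMod k × ZMod k × ZMod k | P t}
      = (↑(univ.filter P) : Set _) := by
    ext t; simp
  rw [hset, Set.ncard_coe_finset]
  have hfib := Finset.card_eq_sum_card_fiberwise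
    (s := univ.filter P) (t := (univ ×ˢ univ : Finset (ZMod k × ZMod k)))
    (f := fun t => (t.2.2.2.1, t.2.2.2.2)) (fun x _ => by simp [Finset.mem_product])
  have hq : ∀ q : ZMod k × ZMod k,
      ((((univ.filter P).filter fun t => (t.2.2.2.1, t.2.2.2.2) = q).card : ℤ))
        = Icard q.1 q.2 := by
    rintro ⟨q1, q2⟩
    rw [Icard]
    have hnat : ((univ.filter P).filter fun t => (t.2.2.2.1, t.2.2.2.2) = (q1, q2)).card
        = (univ.filter fun p : ZMod k × ZMod k × ZMod k =>
            p.1 ∉ ({0, q1, q2} : Finset (ZMod k)) ∧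
            p.2.1 ∉ ({0, q1, q2} : Finset (ZMod k)) ∧
            p.2.2 ∉ ({0, q1, q2} : Finset (ZMod k)) ∧
            p.1 + p.2.1 + p.2.2 ≠ q1 + q2).card := by
      apply card_nbij' (i := fun t => (t.1, t.2.1, t.2.2.1))
        (j := fun p => (p.1, p.2.1, p.2.2, q1, q2))
      · intro t ht
        simp only [mem_coe, mem_filter, mem_univ, true_and, hP, Prod.ext_iff, mem_insert,
          mem_singleton, not_or] at ht ⊢
        obtain ⟨⟨h1, h2, h3, h4, h5, h6, h7, h8, h9, h10⟩, hq1, hq2⟩ := ht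
        rw [← hq1, ← hq2]
        tauto
      · intro p hp
        simp only [mem_coe, mem_filter, mem_univ, true_and, hP, Prod.ext_iff, mem_insert,
          mem_singleton, not_or] at hp ⊢
        tauto
      · intro t ht
        simp only [mem_coe, mem_filter, Prod.ext_iff] at ht
        obtain ⟨-, hq1, hq2⟩ := ht
        simp [Prod.ext_iff, hq1, hq2]
      · intro p _
        rfl
    rw [hnat]
  have hsum : ((univ.filter P).card : ℤ) = ∑ a : ZMod k, ∑ b : ZMod k, Icard a b := by
    rw [hfib]
    push_cast
    rw [Finset.sum_product]
    exact Finset.sum_congr rfl fun a _ => Finset.sum_congr rfl fun b _ => hq (a, b)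
  rw [hsum]
  rw [Finset.sum_eq_sum_sdiff_singleton_add (mem_univ (0 : ZMod k))
    (fun a => ∑ b : ZMod k, Icard a b)]
  rw [row_zero]
  have hcongr : ∑ a ∈ (univ : Finset (ZMod k)) \ {0}, (∑ b : ZMod k, Icard a b)
      = ∑ a ∈ (univ : Finset (ZMod k)) \ {0},
          (2 * C2 (Fintype.card (ZMod k))
            + ((Fintype.card (ZMod k) : ℤ) - 2) * C3 (Fintype.card (ZMod k)) + 2
            + ((univ.filter fun b : ZMod k => b + b = a).card : ℤ)) :=
    Finset.sum_congr rfl fun a ha => row_nonzero a (by simpa using (mem_sdiff.mp ha).2)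
  rw [hcongr, Finset.sum_add_distrib]
  have hcard : (((univ : Finset (ZMod k)) \ {0}).card : ℤ) = (k : ℤ) - 1 := by
    rw [card_sdiff_of_subset (by simp), card_univ, card_singleton, hcardZ]
    omega
  have hconsts : ∑ _a ∈ (univ : Finset (ZMod k)) \ {0},
      (2 * C2 (Fintype.card (ZMod k))
        + ((Fintype.card (ZMod k) : ℤ) - 2) * C3 (Fintype.card (ZMod k)) + 2)
      = ((k : ℤ) - 1) * (2 * C2 (Fintype.card (ZMod k))
        + ((Fintype.card (ZMod k) : ℤ) - 2) * C3 (Fintype.card (ZMod k)) + 2) := by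
    rw [Finset.sum_const, nsmul_eq_mul, hcard]
  have hDs : ∑ a ∈ (univ : Finset (ZMod k)) \ {0},
      ((univ.filter fun b : ZMod k => b + b = a).card : ℤ)
      = (k : ℤ) - ((univ.filter fun b : ZMod k => b + b = (0 : ZMod k)).card : ℤ) := by
    have h := Dtotal (V := ZMod k)
    rw [Finset.sum_eq_sum_sdiff_singleton_add (mem_univ (0 : ZMod k))
      (fun a => ((univ.filter fun b : ZMod k => b + b = a).card : ℤ)), hcardZ] at h
    linarith
  rw [hconsts, hDs, hcardZ]
  rw [C1, C2, C3]
  ring
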